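/- Let A, B > 0 be real constants, let p, q be real exponents with 1 < p < q, and let λ be a real number satisfying 0 < λ < (q−p)^{(q−p)/(q−1)} · (p−1)^{(p−1)/(q−1)} / (A^{(q−p)/(q−1)} · B^{(p−1)/(q−1)} · (q−1)). Define φ : (0, ∞) → ℝ by φ(r) = λ·(A + B·r^{q−1}) − r^{p−1}, and set r₀ = (λ·(q−1)·B / (p−1))^{1/(p−q)}. Then φ(r₀) < 0; in particular inf{φ(r) : r > 0} < 0. -/

import Mathlib

open Set

/-- Under the smallness condition on `λ`, the minimum value `φ(r₀)` of
`φ(r) = λ(A + B r^{q−1}) − r^{p−1}` is negative; in particular `inf{φ(r) : r > 0} < 0`. -/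
theorem stmt_11 (lam A B p q : ℝ) (hA : 0 < A) (hB : 0 < B)
    (hp : 1 < p) (hpq : p < q)
    (hlam : 0 < lam)
    (hlam' : lam < (q - p) ^ ((q - p) / (q - 1)) * (p - 1) ^ ((p - 1) / (q - 1)) /
      (A ^ ((q - p) / (q - 1)) * B ^ ((p - 1) / (q - 1)) * (q - 1)))
    (φ : ℝ → ℝ) (hφ : ∀ r > 0, φ r = lam * (A + B * r ^ (q - 1)) - r ^ (p - 1))
    (r₀ : ℝ) (hr₀ : r₀ = (lam * (q - 1) * B / (p - 1)) ^ (1 / (p - q))) :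
    φ r₀ < 0 ∧ sInf (φ '' Ioi 0) < 0 := by
  have hq1 : 1 < q := hp.trans hpq
  have ha : (0:ℝ) < p - 1 := by linarith
  have hd : (0:ℝ) < q - p := by linarith
  have hb1 : (0:ℝ) < q - 1 := by linarith
  set K : ℝ := lam * (q - 1) * B / (p - 1) with hK_def
  have hK : 0 < K := div_pos (mul_pos (mul_pos hlam hb1) hB) ha
  have hr0pos : 0 < r₀ := by rw [hr₀]; exact Real.rpow_pos_of_pos hK _
  have hpq0 : p - q ≠ 0 := by intro h; linarith [sub_eq_zero.mp h]
  have h1 : r₀ ^ (p - q) = K := by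
    rw [hr₀, ← Real.rpow_mul hK.le, one_div, inv_mul_cancel₀ hpq0, Real.rpow_one]
  have h2 : r₀ ^ (p - 1) = K * r₀ ^ (q - 1) := by
    rw [← h1, ← Real.rpow_add hr0pos]
    congr 1; ring
  -- abbreviations
  set α : ℝ := (q - p) / (q - 1) with hα_def
  have hα : 0 < α := div_pos hd hb1
  set M : ℝ := B * (q - p) / (A * (p - 1)) with hM_def
  have hM : 0 < M := div_pos (mul_pos hB hd) (mul_pos hA ha)
  -- the algebraic identity relating the bound in `hlam'` to `M ^ α`
  have hβ : (p - 1) / (q - 1) = 1 - α := by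
    rw [hα_def]; field_simp; ring
  have hid : (q - p) ^ ((q - p) / (q - 1)) * (p - 1) ^ ((p - 1) / (q - 1)) /
      (A ^ ((q - p) / (q - 1)) * B ^ ((p - 1) / (q - 1)) * (q - 1))
      = (p - 1) / ((q - 1) * B) * M ^ α := by
    rw [hβ, ← hα_def, hM_def, Real.div_rpow (mul_pos hB hd).le (mul_pos hA ha).le,
      Real.mul_rpow hB.le hd.le, Real.mul_rpow hA.le ha.le,
      Real.rpow_sub ha, Real.rpow_sub hB, Real.rpow_one, Real.rpow_one]
    have h1 : (0:ℝ) < (q - p) ^ α := Real.rpow_pos_of_pos hd _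
    have h2 : (0:ℝ) < (p - 1) ^ α := Real.rpow_pos_of_pos ha _
    have h3 : (0:ℝ) < A ^ α := Real.rpow_pos_of_pos hA _
    have h4 : (0:ℝ) < B ^ α := Real.rpow_pos_of_pos hB _
    field_simp
  -- from hlam', deduce K < M ^ α
  have hKM : K < M ^ α := by
    rw [hid] at hlam'
    rw [hK_def]
    rw [div_lt_iff₀ ha] at *
    calc lam * (q - 1) * B < (p - 1) / ((q - 1) * B) * M ^ α * ((q - 1) * B) := by
          have := mul_lt_mul_of_pos_right hlam' (mul_pos hb1 hB)
          calc lam * (q - 1) * B = lam * ((q - 1) * B) := by ring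
            _ < _ := this
      _ = M ^ α * (p - 1) := by field_simp
  -- hence a lower bound for r₀ ^ (q - 1)
  have h3 : r₀ ^ (q - 1) = K ^ ((q - 1) / (p - q)) := by
    rw [hr₀, ← Real.rpow_mul hK.le]
    congr 1
    field_simp
  have hexp_neg : (q - 1) / (p - q) < 0 :=
    div_neg_of_pos_of_neg hb1 (by linarith)
  have hlow : A * (p - 1) / (B * (q - p)) < r₀ ^ (q - 1) := by
    have h4 : (M ^ α) ^ ((q - 1) / (p - q)) < K ^ ((q - 1) / (p - q)) :=
      Real.rpow_lt_rpow_of_neg hK hKM hexp_neg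
    have h5 : (M ^ α) ^ ((q - 1) / (p - q)) = M ^ (-1 : ℝ) := by
      rw [← Real.rpow_mul hM.le]
      congr 1
      rw [hα_def]
      field_simp
      ring
    have h6 : M ^ (-1 : ℝ) = A * (p - 1) / (B * (q - p)) := by
      rw [Real.rpow_neg_one, hM_def, inv_div]
    rw [h3, ← h6, ← h5]
    exact h4
  have hAlt : A * (p - 1) < B * (q - p) * r₀ ^ (q - 1) := by
    rw [div_lt_iff₀ (mul_pos hB hd)] at hlow
    linarith [hlow]
  -- first conclusion
  have hφr₀ : φ r₀ < 0 := by
    rw [hφ r₀ hr0pos, h2, hK_def]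
    have : lam * (A + B * r₀ ^ (q - 1)) - lam * (q - 1) * B / (p - 1) * r₀ ^ (q - 1)
        = lam / (p - 1) * (A * (p - 1) - B * (q - p) * r₀ ^ (q - 1)) := by
      field_simp
      ring
    rw [this]
    exact mul_neg_of_pos_of_neg (div_pos hlam ha) (by linarith)
  refine ⟨hφr₀, ?_⟩
  -- lower bound for φ on (0, ∞)
  set θ : ℝ := (p - 1) / (q - 1) with hθ_def
  have hθ0 : 0 < θ := div_pos ha hb1
  have hθ1 : θ < 1 := (div_lt_one hb1).mpr (by linarith)
  set c : ℝ := lam * B / θ with hc_def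
  have hc : 0 < c := div_pos (mul_pos hlam hB) hθ0
  set D : ℝ := c ^ (-θ / (1 - θ)) with hD_def
  have hD : 0 < D := Real.rpow_pos_of_pos hc _
  have hbound : ∀ r ∈ Ioi (0:ℝ), lam * A - (1 - θ) * D ≤ φ r := by
    intro r hr
    have hr' : (0:ℝ) < r := hr
    have key := Real.geom_mean_le_arith_mean2_weighted (by linarith : (0:ℝ) ≤ 1 - θ)
      hθ0.le hD.le (mul_nonneg hc.le (Real.rpow_pos_of_pos hr' (q-1)).le)
      (by ring : (1 - θ) + θ = 1)
    have hlhs : D ^ (1 - θ) * (c * r ^ (q - 1)) ^ θ = r ^ (p - 1) := by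
      rw [hD_def, ← Real.rpow_mul hc.le,
        Real.mul_rpow hc.le (Real.rpow_pos_of_pos hr' (q-1)).le,
        ← Real.rpow_mul hr'.le]
      have e1 : -θ / (1 - θ) * (1 - θ) = -θ :=
        div_mul_cancel₀ _ (ne_of_gt (by linarith : (0:ℝ) < 1 - θ))
      have e2 : (q - 1) * θ = p - 1 := by
        rw [hθ_def]; field_simp
      rw [e1, e2, ← mul_assoc, ← Real.rpow_add hc, neg_add_cancel, Real.rpow_zero, one_mul]
    have hrhs : (1 - θ) * D + θ * (c * r ^ (q - 1)) = (1 - θ) * D + lam * B * r ^ (q - 1) := by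
      have : θ * c = lam * B := by
        rw [hc_def]; field_simp
      rw [← mul_assoc, this]
    rw [hlhs, hrhs] at key
    rw [hφ r hr']
    nlinarith [key]
  have hbdd : BddBelow (φ '' Ioi 0) := by
    refine ⟨lam * A - (1 - θ) * D, ?_⟩
    rintro x ⟨r, hr, rfl⟩
    exact hbound r hr
  have hmem : φ r₀ ∈ φ '' Ioi 0 := ⟨r₀, hr0pos, rfl⟩
  exact lt_of_le_of_lt (csInf_le hbdd hmem) hφr₀
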